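/- Suppose for every regular α < κ, Q_α = Col(α, α⁺) = {f : f is a function from some ξ < α into α⁺}, and P_κ is the full-support product/iteration of these collapses, with κ measurable witnessed by normal measure U. Then for any condition p ∈ P_κ there exist A* ∈ U, τ* < κ, and p* ≥ p such that for every β ∈ A*, p*↾β forces dom(p*(β)) = τ*. -/

import Mathlib

/-- A coordinate `β < κ` is a regular cardinal. -/
def IsRegularCardOrd (β : Ordinal) : Prop :=
  β = β.card.ord ∧ β.card.IsRegular

/-- A condition of the full-support iteration of `Col(α, α⁺)`: at each regular `α < κ`,
a partial function from some `ξ < α` into `α⁺`, coded by its domain ordinal `d α` and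
values `v α`. -/
def ColValid (κ : Ordinal) (d : Ordinal → Ordinal) (v : Ordinal → Ordinal → Ordinal) : Prop :=
  ∀ β, β < κ → (IsRegularCardOrd β →
    d β < β ∧ ∀ i, i < d β → v β i < (Order.succ β.card).ord) ∧
    (¬IsRegularCardOrd β → d β = 0)

/-- Coordinatewise extension of conditions. -/
def ColExt (κ : Ordinal) (pd : Ordinal → Ordinal) (pv : Ordinal → Ordinal → Ordinal)
    (qd : Ordinal → Ordinal) (qv : Ordinal → Ordinal → Ordinal) : Prop :=
  ∀ β, β < κ → pd β ≤ qd β ∧ ∀ i, i < pd β → qv β i = pv β i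

/-- Domain stabilization (Claim 2 of the paper): if `κ` is measurable with normal measure
`U` and `p` is a condition of the full-support iteration of `Col(α, α⁺)` for regular
`α < κ`, then there are `A* ∈ U`, `τ* < κ` and `p* ≥ p` such that `dom(p*(β)) = τ*` for
every `β ∈ A*`. -/
theorem stmt17 (κ : Ordinal)
    (U : Set (Set Ordinal))
    (hsub : ∀ A ∈ U, A ⊆ Set.Iio κ)
    (htop : Set.Iio κ ∈ U)
    (hne : (∅ : Set Ordinal) ∉ U)
    (hinter : ∀ A ∈ U, ∀ B ∈ U, A ∩ B ∈ U)
    (hup : ∀ A ∈ U, ∀ B : Set Ordinal, A ⊆ B → B ⊆ Set.Iio κ → B ∈ U)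
    (hultra : ∀ A : Set Ordinal, A ⊆ Set.Iio κ → A ∈ U ∨ (Set.Iio κ \ A) ∈ U)
    (hcomplete : ∀ (ι : Type) (_ : Cardinal.mk ι < κ.card) (f : ι → Set Ordinal),
      (∀ i, f i ∈ U) → ((⋂ i, f i) ∩ Set.Iio κ) ∈ U)
    (hnormal : ∀ f : Ordinal → Ordinal, ∀ A ∈ U, (∀ α ∈ A, α ≠ 0 → f α < α) →
      ∃ B ∈ U, B ⊆ A ∧ ∃ c, ∀ α ∈ B, α ≠ 0 → f α = c)
    (hregU : {β | β < κ ∧ IsRegularCardOrd β} ∈ U)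
    (pd : Ordinal → Ordinal) (pv : Ordinal → Ordinal → Ordinal)
    (hp : ColValid κ pd pv) :
    ∃ A ∈ U, ∃ τ, τ < κ ∧ ∃ qd qv, ColValid κ qd qv ∧ ColExt κ pd pv qd qv ∧
      ∀ β ∈ A, qd β = τ := by
  obtain ⟨B, hBU, hBA, c, hc⟩ := hnormal pd _ hregU (fun α hα _ => (hp α hα.1).1 hα.2 |>.1)
  have hB0 : ∀ β ∈ B, β ≠ 0 := by
    intro β hβ h0
    have := (hBA hβ).2
    rw [h0] at this
    have h := this.2.aleph0_le
    simp only [Ordinal.card_zero] at h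
    exact absurd (le_antisymm h zero_le) Cardinal.aleph0_ne_zero
  have hBne : B.Nonempty := by
    rcases Set.eq_empty_or_nonempty B with h | h
    · exact absurd (h ▸ hBU) hne
    · exact h
  obtain ⟨β₀, hβ₀⟩ := hBne
  refine ⟨B, hBU, c, ?_, pd, pv, hp, fun β hβ => ⟨le_rfl, fun i _ => rfl⟩, ?_⟩
  · have h1 := hc β₀ hβ₀ (hB0 β₀ hβ₀)
    have h2 := ((hp β₀ (hBA hβ₀).1).1 (hBA hβ₀).2).1
    exact h1 ▸ lt_trans h2 (hBA hβ₀).1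
  · intro β hβ
    exact hc β hβ (hB0 β hβ)
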